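/- Let s : ℕ → ℝ satisfy s(0)=0, s(1)=1, and the recursion s(n+1) = (1/(n+1)) Σ_{k=1}^{n+1} max{s(n), 1+s(n+1-k)}, and suppose s is monotone increasing. Then for all n ≥ 1, s(n+1) = (1/(n+1)) · max_{1 ≤ k ≤ n} { k + (n-k+1)·s(n) + Σ_{i=n-k+1}^{n} s(i) }. -/

import Mathlib

open Finset

/-- `H n k g = k + (n-k+1) g(n) + ∑_{i=n-k+1}^{n} g(i)`. -/
noncomputable def H (g : ℕ → ℝ) (n k : ℕ) : ℝ :=
  (k : ℝ) + ((n : ℝ) - (k : ℝ) + 1) * g n + ∑ i ∈ Finset.Icc (n - k + 1) n, g i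

lemma Hsum (s : ℕ → ℝ) (n k : ℕ) (hk1 : 1 ≤ k) (hkn : k ≤ n) :
    H s n k = ∑ j ∈ Finset.Icc 1 (n + 1),
      (if j ≤ k then 1 + s (n + 1 - j) else s n) := by
  have hsplit : Finset.Icc 1 (n+1) = Finset.Ioc 0 k ∪ Finset.Ioc k (n+1) := by
    rw [Finset.Ioc_union_Ioc_eq_Ioc (Nat.zero_le k) (by omega)]
    ext x; simp; omega
  rw [hsplit, Finset.sum_union (by
    simp [Finset.disjoint_left]; omega)]
  have h1 : ∑ j ∈ Finset.Ioc 0 k, (if j ≤ k then 1 + s (n + 1 - j) else s n)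
      = (k : ℝ) + ∑ i ∈ Finset.Icc (n - k + 1) n, s i := by
    rw [Finset.sum_congr rfl (fun j hj => if_pos (Finset.mem_Ioc.mp hj).2)]
    rw [Finset.sum_add_distrib]
    congr 1
    · simp [Nat.card_Ioc]
    · apply Finset.sum_nbij' (i := fun j => n + 1 - j) (j := fun i => n + 1 - i)
      · intro a ha; simp at ha ⊢; omega
      · intro a ha; simp at ha ⊢; omega
      · intro a ha; simp at ha; omega
      · intro a ha; simp at ha; omega
      · intro a ha; rfl
  have h2 : ∑ j ∈ Finset.Ioc k (n+1), (if j ≤ k then 1 + s (n + 1 - j) else s n)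
      = ((n : ℝ) - k + 1) * s n := by
    rw [Finset.sum_congr rfl (fun j hj => if_neg (by
      have := (Finset.mem_Ioc.mp hj).1; omega))]
    rw [Finset.sum_const, Nat.card_Ioc, nsmul_eq_mul]
    congr 1
    push_cast [Nat.cast_sub (by omega : k ≤ n + 1)]
    ring
  rw [h1, h2, H]; ring

theorem stmt_2 (s : ℕ → ℝ) (h0 : s 0 = 0) (h1 : s 1 = 1)
    (hrec : ∀ n : ℕ, 1 ≤ n →
      s (n + 1) = (1 / ((n : ℝ) + 1)) *
        ∑ k ∈ Finset.Icc 1 (n + 1), max (s n) (1 + s (n + 1 - k)))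
    (hmono : Monotone s) :
    ∀ n : ℕ, ∀ hn : 1 ≤ n,
      s (n + 1) = (1 / ((n : ℝ) + 1)) *
        (Finset.Icc 1 n).sup' (Finset.nonempty_Icc.mpr hn) (fun k => H s n k) := by
  intro n hn
  rw [hrec n hn]
  congr 1
  have hs1 : (1 : ℝ) ≤ s n := h1 ▸ hmono hn
  apply le_antisymm
  · -- sum of maxes ≤ sup' : sum equals H at k*
    set K := (Finset.Icc 1 n).filter (fun k => s n ≤ 1 + s (n + 1 - k)) with hK
    have hKne : K.Nonempty := ⟨1, by
      have h' : s n ≤ 1 + s (n + 1 - 1) := by norm_num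
      exact Finset.mem_filter.mpr ⟨Finset.mem_Icc.mpr ⟨le_refl 1, hn⟩, h'⟩⟩
    set k0 := K.max' hKne with hk0
    have hk0K : k0 ∈ K := K.max'_mem hKne
    have hk0mem : k0 ∈ Finset.Icc 1 n := (Finset.mem_filter.mp hk0K).1
    have hk0prop : s n ≤ 1 + s (n + 1 - k0) := (Finset.mem_filter.mp hk0K).2
    obtain ⟨hk01, hk0n⟩ := Finset.mem_Icc.mp hk0mem
    have key : ∑ k ∈ Finset.Icc 1 (n + 1), max (s n) (1 + s (n + 1 - k))
        = H s n k0 := by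
      rw [Hsum s n k0 hk01 hk0n]
      apply Finset.sum_congr rfl
      intro j hj
      obtain ⟨hj1, hjn⟩ := Finset.mem_Icc.mp hj
      by_cases hjk : j ≤ k0
      · rw [if_pos hjk, max_eq_right]
        calc s n ≤ 1 + s (n + 1 - k0) := hk0prop
          _ ≤ 1 + s (n + 1 - j) := by
            have := hmono (show n + 1 - k0 ≤ n + 1 - j by omega); linarith
      · rw [if_neg hjk, max_eq_left]
        by_cases hjn' : j ≤ n
        · by_contra hc
          push_neg at hc
          have hjK : j ∈ K := Finset.mem_filter.mpr
            ⟨Finset.mem_Icc.mpr ⟨hj1, hjn'⟩, le_of_lt hc⟩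
          exact hjk (K.le_max' j hjK)
        · have : j = n + 1 := by omega
          subst this
          simp [h0]
          linarith
    rw [key]
    exact Finset.le_sup' (fun k => H s n k) hk0mem
  · apply Finset.sup'_le
    intro k hk
    obtain ⟨hk1, hkn⟩ := Finset.mem_Icc.mp hk
    rw [Hsum s n k hk1 hkn]
    apply Finset.sum_le_sum
    intro j _
    by_cases hjk : j ≤ k
    · rw [if_pos hjk]; exact le_max_right _ _
    · rw [if_neg hjk]; exact le_max_left _ _
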